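/- An affine transformation A : F^d → F^d respects both the Euclidean congruence relation ≡ and the betweenness relation Bw if and only if A is a Euclidean similarity. (That is, the affine automorphisms of Euclidean geometry ⟨F^d, ≡, Bw⟩ are exactly the Euclidean similarities.) -/

import Mathlib

namespace Spacetimes

open Finset

variable {F : Type*} [Field F] [LinearOrder F] [IsStrictOrderedRing F] {d : ℕ}

/-- The Euclidean scalar product on `Fin d → F`. -/
def euclProd (p q : Fin d → F) : F := ∑ i, p i * q i

/-- The Minkowski product on `Fin d → F`; index `0` is the time coordinate. -/
def minkProd [NeZero d] (p q : Fin d → F) : F :=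
  p 0 * q 0 - ∑ i ∈ Finset.univ.erase (0 : Fin d), p i * q i

/-- The squared distance function associated to a product `B`. -/
def sqDist (B : (Fin d → F) → (Fin d → F) → F) (p q : Fin d → F) : F :=
  B (p - q) (p - q)

/-- An affine transformation: a linear bijection composed with a translation. -/
def IsAffine (A : (Fin d → F) → (Fin d → F)) : Prop :=
  ∃ (L : (Fin d → F) ≃ₗ[F] (Fin d → F)) (t : Fin d → F), ∀ p, A p = L p + t

/-- A Euclidean similarity: an affine transformation scaling squared
Euclidean distances by a constant factor. -/
def EuclSim (A : (Fin d → F) → (Fin d → F)) : Prop :=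
  IsAffine A ∧ ∃ a : F, ∀ p q : Fin d → F,
    sqDist euclProd (A p) (A q) = a * sqDist euclProd p q

/-- A Poincaré similarity: an affine transformation scaling squared
Minkowski distances by a constant factor. -/
def PoiSim [NeZero d] (A : (Fin d → F) → (Fin d → F)) : Prop :=
  IsAffine A ∧ ∃ a : F, ∀ p q : Fin d → F,
    sqDist minkProd (A p) (A q) = a * sqDist minkProd p q

/-- A Galilean similarity. -/
def GalSim [NeZero d] (A : (Fin d → F) → (Fin d → F)) : Prop :=
  IsAffine A ∧ ∃ a : F, ∀ p q : Fin d → F, p 0 = q 0 →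
    A p 0 = A q 0 ∧ sqDist euclProd (A p) (A q) = a * sqDist euclProd p q

/-- A map respects a binary relation. -/
def Respects2 {α : Type*} (f : α → α) (R : α → α → Prop) : Prop :=
  ∀ p q, R p q ↔ R (f p) (f q)

/-- A map respects a ternary relation. -/
def Respects3 {α : Type*} (f : α → α) (R : α → α → α → Prop) : Prop :=
  ∀ p q r, R p q r ↔ R (f p) (f q) (f r)

/-- A map respects a 4-ary relation. -/
def Respects4 {α : Type*} (f : α → α) (R : α → α → α → α → Prop) : Prop :=
  ∀ p q r s, R p q r s ↔ R (f p) (f q) (f r) (f s)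

/-- Absolute simultaneity. -/
def SimRel [NeZero d] (p q : Fin d → F) : Prop := p 0 = q 0

/-- Being at rest (same spatial components). -/
def RestRel [NeZero d] (p q : Fin d → F) : Prop := ∀ i, i ≠ 0 → p i = q i

/-- A trivial Euclidean similarity: a Euclidean similarity respecting `RestRel`. -/
def TrivEuclSim [NeZero d] (A : (Fin d → F) → (Fin d → F)) : Prop :=
  EuclSim A ∧ Respects2 A RestRel

/-- A trivial Galilean similarity: a Galilean similarity respecting `RestRel`. -/
def TrivGalSim [NeZero d] (A : (Fin d → F) → (Fin d → F)) : Prop :=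
  GalSim A ∧ Respects2 A RestRel

/-- Betweenness. -/
def Bw (p q r : Fin d → F) : Prop :=
  ∃ l : F, 0 ≤ l ∧ l ≤ 1 ∧ q = p + l • (r - p)

/-- Lightlike relatedness. -/
def Light [NeZero d] (p q : Fin d → F) : Prop :=
  (p 0 - q 0) ^ 2 = ∑ i ∈ Finset.univ.erase (0 : Fin d), (p i - q i) ^ 2

/-- Euclidean congruence of segments. -/
def CongE (p q r s : Fin d → F) : Prop :=
  sqDist euclProd p q = sqDist euclProd r s

/-- Minkowski congruence of segments. -/
def CongM [NeZero d] (p q r s : Fin d → F) : Prop :=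
  sqDist minkProd p q = sqDist minkProd r s

/-- Congruence on simultaneity. -/
def CongS [NeZero d] (p q r s : Fin d → F) : Prop :=
  CongE p q r s ∧ SimRel p q ∧ SimRel r s

/-- The time axis. -/
def timeAxis (F : Type*) [Field F] [LinearOrder F] [IsStrictOrderedRing F] (d : ℕ) [NeZero d] :
    Set (Fin d → F) := {p | ∀ i, i ≠ 0 → p i = 0}

/-- The simultaneity at the origin. -/
def simul0 (F : Type*) [Field F] [LinearOrder F] [IsStrictOrderedRing F] (d : ℕ) [NeZero d] :
    Set (Fin d → F) := {p | p 0 = 0}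

/-- The `i`-th standard unit vector. -/
def unitVec (F : Type*) [Field F] [LinearOrder F] [IsStrictOrderedRing F] {d : ℕ} (i : Fin d) : Fin d → F :=
  Pi.single i 1


section Aux

lemma euclProd_comm (p q : Fin d → F) : euclProd p q = euclProd q p := by
  simp [euclProd, mul_comm]

lemma euclProd_smul_left (c : F) (p q : Fin d → F) :
    euclProd (c • p) q = c * euclProd p q := by
  simp [euclProd, Finset.mul_sum, mul_assoc]

lemma euclProd_sum_left {ι : Type*} (s : Finset ι) (f : ι → Fin d → F) (q : Fin d → F) :
    euclProd (∑ i ∈ s, f i) q = ∑ i ∈ s, euclProd (f i) q := by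
  simp only [euclProd, Finset.sum_apply, Finset.sum_mul]
  exact Finset.sum_comm

lemma euclProd_self_add (u w : Fin d → F) :
    euclProd (u + w) (u + w) = euclProd u u + 2 * euclProd u w + euclProd w w := by
  simp only [euclProd, Pi.add_apply, Finset.mul_sum, ← Finset.sum_add_distrib]
  exact Finset.sum_congr rfl fun i _ => by ring

lemma euclProd_self_sub (u w : Fin d → F) :
    euclProd (u - w) (u - w) = euclProd u u - 2 * euclProd u w + euclProd w w := by
  simp only [euclProd, Pi.sub_apply, Finset.mul_sum, ← Finset.sum_add_distrib,
    ← Finset.sum_sub_distrib]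
  exact Finset.sum_congr rfl fun i _ => by ring

lemma euclProd_unitVec (i j : Fin d) :
    euclProd (unitVec F i) (unitVec F j) = if i = j then 1 else 0 := by
  simp only [euclProd, unitVec, Pi.single_apply]
  rcases eq_or_ne i j with h | h
  · subst h
    simp [Finset.sum_ite_eq']
  · simp only [if_neg h]
    apply Finset.sum_eq_zero
    intro k _
    rcases eq_or_ne k i with hk | hk
    · simp [hk, h]
    · simp [hk]

lemma euclProd_self_nonneg (v : Fin d → F) : 0 ≤ euclProd v v :=
  Finset.sum_nonneg fun i _ => mul_self_nonneg _

lemma euclProd_self_eq_zero {v : Fin d → F} (h : euclProd v v = 0) : v = 0 := by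
  funext i
  have := (Finset.sum_eq_zero_iff_of_nonneg (fun i _ => mul_self_nonneg (v i))).mp h i
    (Finset.mem_univ i)
  have := mul_self_eq_zero.mp this
  simpa using this

lemma pi_eq_sum_unitVec (v : Fin d → F) : v = ∑ i, v i • unitVec F i := by
  funext j
  simp [unitVec, Pi.single_apply, Finset.sum_ite_eq]

end Aux

/-- the affine automorphisms of Euclidean geometry
`⟨F^d, ≡, Bw⟩` are exactly the Euclidean similarities. -/
theorem affAut_eucl_eq_euclSim (hd : 2 ≤ d)
    (A : (Fin d → F) → (Fin d → F)) (hA : IsAffine A) :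
    (Respects4 A CongE ∧ Respects3 A Bw) ↔ EuclSim A := by
  obtain ⟨L, t, hL⟩ := hA
  have hAsub : ∀ p q : Fin d → F, A p - A q = L (p - q) := by
    intro p q
    simp only [hL, map_sub]
    abel
  have hsq : ∀ p q : Fin d → F,
      sqDist euclProd (A p) (A q) = euclProd (L (p - q)) (L (p - q)) := by
    intro p q
    rw [sqDist, hAsub]
  have i0 : Fin d := ⟨0, by omega⟩
  constructor
  · rintro ⟨hC, -⟩
    have hQ : ∀ v w : Fin d → F, euclProd v v = euclProd w w →
        euclProd (L v) (L v) = euclProd (L w) (L w) := by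
      intro v w h
      have h2 := (hC v 0 w 0).mp (by simpa [CongE, sqDist] using h)
      simpa [CongE, hsq] using h2
    set a : F := euclProd (L (unitVec F i0)) (L (unitVec F i0)) with ha
    have hdiag : ∀ i : Fin d, euclProd (L (unitVec F i)) (L (unitVec F i)) = a := by
      intro i
      exact hQ _ _ (by simp [euclProd_unitVec])
    have hcross : ∀ i j : Fin d, i ≠ j →
        euclProd (L (unitVec F i)) (L (unitVec F j)) = 0 := by
      intro i j hij
      have hnorm : euclProd (unitVec F i + unitVec F j) (unitVec F i + unitVec F j)
          = euclProd (unitVec F i - unitVec F j) (unitVec F i - unitVec F j) := by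
        simp [euclProd_self_add, euclProd_self_sub, euclProd_unitVec, hij]
      have h := hQ _ _ hnorm
      rw [map_add, map_sub, euclProd_self_add, euclProd_self_sub] at h
      linarith
    have key : ∀ v : Fin d → F, euclProd (L v) (L v) = a * euclProd v v := by
      intro v
      have hLv : L v = ∑ i, v i • L (unitVec F i) := by
        conv_lhs => rw [pi_eq_sum_unitVec v]
        simp [map_sum]
      calc euclProd (L v) (L v)
          = ∑ i, ∑ j, v i * (v j * euclProd (L (unitVec F i)) (L (unitVec F j))) := by
            rw [hLv, euclProd_sum_left]
            refine Finset.sum_congr rfl fun i _ => ?_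
            rw [euclProd_smul_left, euclProd_comm, euclProd_sum_left, Finset.mul_sum]
            refine Finset.sum_congr rfl fun j _ => ?_
            rw [euclProd_smul_left, euclProd_comm (L (unitVec F j))]
        _ = ∑ i, v i * v i * a := by
            refine Finset.sum_congr rfl fun i _ => ?_
            rw [Finset.sum_eq_single i]
            · rw [hdiag]; ring
            · intro j _ hj
              rw [hcross i j (Ne.symm hj)]
              ring
            · intro h; exact absurd (Finset.mem_univ i) h
        _ = a * euclProd v v := by
            rw [euclProd, Finset.mul_sum]
            exact Finset.sum_congr rfl fun i _ => by ring
    refine ⟨⟨L, t, hL⟩, a, fun p q => ?_⟩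
    rw [hsq, key]
    rfl
  · rintro ⟨-, a, hsim⟩
    have ha0 : a ≠ 0 := by
      intro h0
      have h1 := hsim (unitVec F i0) 0
      rw [hsq, h0, zero_mul, sub_zero] at h1
      have h2 := euclProd_self_eq_zero h1
      have h3 : unitVec F i0 = 0 := by
        have := L.injective (by simpa using h2)
        simpa using this
      have := congrFun h3 i0
      simp [unitVec] at this
    constructor
    · intro p q r s
      unfold CongE
      rw [hsim p q, hsim r s]
      constructor
      · intro h; rw [h]
      · intro h; exact mul_left_cancel₀ ha0 h
    · intro p q r
      constructor
      · rintro ⟨l, h0, h1, hq⟩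
        refine ⟨l, h0, h1, ?_⟩
        rw [hq]
        simp only [hL, map_add, map_smul, map_sub]
        module
      · rintro ⟨l, h0, h1, hq⟩
        refine ⟨l, h0, h1, ?_⟩
        apply L.injective
        simp only [hL] at hq
        have h2 : L q + t = (L (p + l • (r - p))) + t := by
          rw [hq, map_add, map_smul, map_sub]
          module
        exact add_right_cancel h2

end Spacetimes
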